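/- Petermichl's operator 𝒫f = ∑_{I ∈ 𝒟⁺} ⟨f, h_I⟩ (h_{I⁻} − h_{I⁺}) is bounded on L²([0,∞)) with ‖𝒫f‖₂² ≤ 2‖f‖₂². -/

import Mathlib

open MeasureTheory Set
open scoped ENNReal NNReal

/-- The standard dyadic interval `[k·2^{-j}, (k+1)·2^{-j})` contained in `[0,∞)`. -/
def dyadicI (j : ℤ) (k : ℕ) : Set ℝ :=
  Set.Ico ((k : ℝ) * (2:ℝ) ^ (-j)) (((k : ℝ) + 1) * (2:ℝ) ^ (-j))

/-- The dyadic ultrametric on `[0,∞)`: the infimum of the lengths of the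
dyadic intervals containing both points. -/
noncomputable def delta (x y : ℝ) : ℝ :=
  if x = y then 0
  else sInf {L : ℝ | ∃ j : ℤ, ∃ k : ℕ, L = (2:ℝ) ^ (-j) ∧ x ∈ dyadicI j k ∧ y ∈ dyadicI j k}

/-- The Haar function of the dyadic interval `dyadicI j k`. -/
noncomputable def haar (j : ℤ) (k : ℕ) (t : ℝ) : ℝ :=
  Real.sqrt ((2:ℝ) ^ j) *
    ((dyadicI (j+1) (2*k)).indicator (fun _ => (1:ℝ)) t
      - (dyadicI (j+1) (2*k+1)).indicator (fun _ => (1:ℝ)) t)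

/-- Petermichl's kernel on `[0,∞)`. -/
noncomputable def Pker (x y : ℝ) : ℝ :=
  ∑' p : ℤ × ℕ,
    haar p.1 p.2 y * (haar (p.1+1) (2*p.2) x - haar (p.1+1) (2*p.2+1) x)

/-- The elementary building block `Ω_J` associated with the dyadic interval `J = dyadicI j k`. -/
noncomputable def Omega (j : ℤ) (k : ℕ) (x y : ℝ) : ℝ :=
  ((dyadicI (j+1) (2*k)).indicator (fun _ => (1:ℝ)) y
    - (dyadicI (j+1) (2*k+1)).indicator (fun _ => (1:ℝ)) y) *
  (((dyadicI (j+2) (4*k+1)).indicator (fun _ => (1:ℝ)) x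
      + (dyadicI (j+2) (4*k+2)).indicator (fun _ => (1:ℝ)) x)
    - ((dyadicI (j+2) (4*k)).indicator (fun _ => (1:ℝ)) x
      + (dyadicI (j+2) (4*k+3)).indicator (fun _ => (1:ℝ)) x))

/-- The scale truncation `P^{l,m}` of Petermichl's kernel: only the dyadic
intervals with `2^l ≤ |I| < 2^m` are kept. -/
noncomputable def PkerScale (l m : ℤ) (x y : ℝ) : ℝ :=
  ∑' p : ℤ × ℕ,
    if (2:ℝ) ^ l ≤ (2:ℝ) ^ (-p.1) ∧ (2:ℝ) ^ (-p.1) < (2:ℝ) ^ m then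
      haar p.1 p.2 y * (haar (p.1+1) (2*p.2) x - haar (p.1+1) (2*p.2+1) x)
    else 0

/-- The metric truncation `P_{l,m}` of Petermichl's kernel. -/
noncomputable def PkerMetric (l m : ℤ) (x y : ℝ) : ℝ :=
  if (2:ℝ) ^ l ≤ delta x y ∧ delta x y < (2:ℝ) ^ m then Pker x y else 0


/-- Petermichl's operator `𝒫 f = ∑_{I ∈ 𝒟⁺} ⟨f, h_I⟩ (h_{I⁻} − h_{I⁺})`. -/
noncomputable def Pop (f : ℝ → ℝ) (x : ℝ) : ℝ :=
  ∑' p : ℤ × ℕ,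
    (∫ y in Set.Ici (0:ℝ), f y * haar p.1 p.2 y) *
      (haar (p.1+1) (2*p.2) x - haar (p.1+1) (2*p.2+1) x)

lemma two_zpow_pos (j : ℤ) : (0:ℝ) < (2:ℝ) ^ j := zpow_pos two_pos j

lemma mem_dyadicI {j : ℤ} {k : ℕ} {x : ℝ} :
    x ∈ dyadicI j k ↔ (k : ℝ) * (2:ℝ) ^ (-j) ≤ x ∧ x < ((k:ℝ)+1) * (2:ℝ) ^ (-j) := Iff.rfl

lemma dyadicI_disj {j : ℤ} {k k' : ℕ} (h : k ≠ k') {x : ℝ}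
    (hx : x ∈ dyadicI j k) : x ∉ dyadicI j k' := by
  rintro ⟨h3, h4⟩
  obtain ⟨h1, h2⟩ := hx
  have hp := two_zpow_pos (-j)
  have e1 : (k : ℝ) < (k' : ℝ) + 1 := by
    have := h1.trans_lt h4
    exact lt_of_mul_lt_mul_right this hp.le
  have e2 : (k' : ℝ) < (k : ℝ) + 1 := by
    have := h3.trans_lt h2
    exact lt_of_mul_lt_mul_right this hp.le
  have hk : (k:ℤ) = k' := by
    have e1' : (k:ℤ) < (k':ℤ) + 1 := by exact_mod_cast e1
    have e2' : (k':ℤ) < (k:ℤ) + 1 := by exact_mod_cast e2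
    omega
  exact h (by exact_mod_cast hk)

lemma dyadicI_subset {j j' : ℤ} (h : j ≤ j') (k' : ℕ) :
    dyadicI j' k' ⊆ dyadicI j (k' / 2 ^ (j' - j).toNat) := by
  intro x hx
  obtain ⟨h1, h2⟩ := hx
  set d := (j' - j).toNat with hd
  have hdz : (d : ℤ) = j' - j := Int.toNat_of_nonneg (by omega)
  set m := k' / 2 ^ d with hm
  have hml : m * 2 ^ d ≤ k' := Nat.div_mul_le_self _ _
  have hmu : k' < (m + 1) * 2 ^ d := by
    have h1' := Nat.div_add_mod k' (2 ^ d)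
    have h2' := Nat.mod_lt k' (pow_pos two_pos d)
    calc k' = 2 ^ d * m + k' % 2 ^ d := h1'.symm
    _ < 2 ^ d * m + 2 ^ d := by omega
    _ = (m + 1) * 2 ^ d := by ring
  have hkey : (2:ℝ) ^ (-j) = (2 ^ d : ℕ) * (2:ℝ) ^ (-j') := by
    push_cast
    rw [← zpow_natCast (2:ℝ) d, ← zpow_add₀ (two_ne_zero)]
    congr 1; omega
  constructor
  · calc (m : ℝ) * (2:ℝ)^(-j) = ((m * 2 ^ d : ℕ) : ℝ) * (2:ℝ)^(-j') := by
          rw [hkey]; push_cast; ring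
    _ ≤ (k' : ℝ) * (2:ℝ)^(-j') := by
          apply mul_le_mul_of_nonneg_right _ (two_zpow_pos _).le
          exact_mod_cast hml
    _ ≤ x := h1
  · calc x < ((k':ℝ)+1) * (2:ℝ)^(-j') := h2
    _ ≤ (((m+1) * 2 ^ d : ℕ) : ℝ) * (2:ℝ)^(-j') := by
          apply mul_le_mul_of_nonneg_right _ (two_zpow_pos _).le
          exact_mod_cast hmu
    _ = ((m:ℝ)+1) * (2:ℝ)^(-j) := by rw [hkey]; push_cast; ring

lemma dyadicI_half_subset_left (j : ℤ) (k : ℕ) : dyadicI (j+1) (2*k) ⊆ dyadicI j k := by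
  have h := dyadicI_subset (le_of_lt (lt_add_one j)) (k' := 2*k) (j' := j+1)
  have : (j + 1 - j).toNat = 1 := by omega
  rw [this] at h
  simpa using h

lemma dyadicI_half_subset_right (j : ℤ) (k : ℕ) : dyadicI (j+1) (2*k+1) ⊆ dyadicI j k := by
  have h := dyadicI_subset (le_of_lt (lt_add_one j)) (k' := 2*k+1) (j' := j+1)
  have h2 : (j + 1 - j).toNat = 1 := by omega
  rw [h2] at h
  have h3 : (2 * k + 1) / 2 ^ 1 = k := by omega
  rwa [h3] at h

lemma haar_support {j : ℤ} {k : ℕ} {x : ℝ} (hx : x ∉ dyadicI j k) : haar j k x = 0 := by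
  rw [haar, indicator_of_notMem (fun h => hx (dyadicI_half_subset_left j k h)),
    indicator_of_notMem (fun h => hx (dyadicI_half_subset_right j k h))]
  ring

lemma haar_on_piece {j : ℤ} {k m : ℕ} {x : ℝ} (hx : x ∈ dyadicI (j+1) m) :
    haar j k x = Real.sqrt ((2:ℝ) ^ j) *
      ((if m = 2*k then (1:ℝ) else 0) - (if m = 2*k+1 then (1:ℝ) else 0)) := by
  rw [haar]
  congr 1
  congr 1
  · by_cases h : m = 2*k
    · subst h; rw [indicator_of_mem hx]; simp
    · rw [indicator_of_notMem (dyadicI_disj h hx), if_neg h]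
  · by_cases h : m = 2*k+1
    · subst h; rw [indicator_of_mem hx]; simp
    · rw [indicator_of_notMem (dyadicI_disj h hx), if_neg h]

lemma dyadicI_subset_Ici (j : ℤ) (k : ℕ) : dyadicI j k ⊆ Ici (0:ℝ) := fun x hx =>
  le_trans (by positivity) hx.1

lemma measurableSet_dyadicI (j : ℤ) (k : ℕ) : MeasurableSet (dyadicI j k) := measurableSet_Ico

lemma measurable_haar (j : ℤ) (k : ℕ) : Measurable (haar j k) := by
  apply Measurable.const_mul
  exact ((measurable_const.indicator (measurableSet_dyadicI _ _)).sub
    (measurable_const.indicator (measurableSet_dyadicI _ _)))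

lemma integral_indicator_dyadicI (j : ℤ) (k : ℕ) :
    ∫ x in Ici (0:ℝ), (dyadicI j k).indicator (fun _ => (1:ℝ)) x = (2:ℝ) ^ (-j) := by
  rw [integral_indicator (measurableSet_dyadicI j k), setIntegral_const,
    Measure.real, Measure.restrict_apply (measurableSet_dyadicI j k),
    inter_eq_left.mpr (dyadicI_subset_Ici j k)]
  rw [dyadicI, Real.volume_Ico]
  have : ((k:ℝ)+1) * (2:ℝ)^(-j) - (k:ℝ) * (2:ℝ)^(-j) = (2:ℝ)^(-j) := by ring
  rw [this, ENNReal.toReal_ofReal (two_zpow_pos _).le, smul_eq_mul, mul_one]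

lemma integrableOn_indicator_dyadicI (j : ℤ) (k : ℕ) :
    Integrable ((dyadicI j k).indicator (fun _ => (1:ℝ))) (volume.restrict (Ici (0:ℝ))) := by
  rw [integrable_indicator_iff (measurableSet_dyadicI j k)]
  refine integrableOn_const ?_ (by simp)
  rw [Measure.restrict_apply (measurableSet_dyadicI j k),
    inter_eq_left.mpr (dyadicI_subset_Ici j k), dyadicI, Real.volume_Ico]
  exact ENNReal.ofReal_ne_top

lemma haar_memℒp (j : ℤ) (k : ℕ) : MemLp (haar j k) 2 (volume.restrict (Ici (0:ℝ))) := by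
  have hi : ∀ (j' : ℤ) (k' : ℕ), MemLp ((dyadicI j' k').indicator (fun _ => (1:ℝ))) 2
      (volume.restrict (Ici (0:ℝ))) := by
    intro j' k'
    apply memLp_indicator_const 2 (measurableSet_dyadicI j' k') (1:ℝ)
    right
    rw [Measure.restrict_apply (measurableSet_dyadicI j' k'),
      inter_eq_left.mpr (dyadicI_subset_Ici j' k'), dyadicI, Real.volume_Ico]
    exact ENNReal.ofReal_ne_top
  exact ((hi (j+1) (2*k)).sub (hi (j+1) (2*k+1))).const_mul _

lemma integral_haar (j : ℤ) (k : ℕ) : ∫ x in Ici (0:ℝ), haar j k x = 0 := by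
  simp only [haar]
  rw [integral_const_mul, integral_sub (integrableOn_indicator_dyadicI _ _)
    (integrableOn_indicator_dyadicI _ _), integral_indicator_dyadicI, integral_indicator_dyadicI,
    sub_self, mul_zero]

lemma haar_sq (j : ℤ) (k : ℕ) (x : ℝ) :
    haar j k x * haar j k x = (2:ℝ)^j *
      ((dyadicI (j+1) (2*k)).indicator (fun _ => (1:ℝ)) x
        + (dyadicI (j+1) (2*k+1)).indicator (fun _ => (1:ℝ)) x) := by
  rw [haar]
  have hs : Real.sqrt ((2:ℝ)^j) * Real.sqrt ((2:ℝ)^j) = (2:ℝ)^j :=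
    Real.mul_self_sqrt (two_zpow_pos j).le
  by_cases h1 : x ∈ dyadicI (j+1) (2*k)
  · rw [indicator_of_mem h1, indicator_of_notMem (dyadicI_disj (by omega) h1)]
    nlinarith [hs]
  · rw [indicator_of_notMem h1]
    by_cases h2 : x ∈ dyadicI (j+1) (2*k+1)
    · rw [indicator_of_mem h2]; nlinarith [hs]
    · rw [indicator_of_notMem h2]; ring

lemma integral_haar_sq (j : ℤ) (k : ℕ) :
    ∫ x in Ici (0:ℝ), haar j k x * haar j k x = 1 := by
  have : ∀ x, haar j k x * haar j k x = (2:ℝ)^j *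
      ((dyadicI (j+1) (2*k)).indicator (fun _ => (1:ℝ)) x
        + (dyadicI (j+1) (2*k+1)).indicator (fun _ => (1:ℝ)) x) := haar_sq j k
  rw [integral_congr_ae (Filter.Eventually.of_forall this), integral_const_mul,
    integral_add (integrableOn_indicator_dyadicI _ _) (integrableOn_indicator_dyadicI _ _),
    integral_indicator_dyadicI, integral_indicator_dyadicI]
  have h2 : (2:ℝ)^(-(j+1)) + (2:ℝ)^(-(j+1)) = (2:ℝ)^(-j) := by
    rw [← two_mul]
    rw [show -j = 1 + -(j+1) by ring, zpow_add₀ (two_ne_zero : (2:ℝ) ≠ 0)]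
    norm_num
  rw [h2, ← zpow_add₀ (two_ne_zero : (2:ℝ) ≠ 0)]
  simp

lemma haar_mul_haar_same {j : ℤ} {k k' : ℕ} (h : k ≠ k') (x : ℝ) :
    haar j k x * haar j k' x = 0 := by
  by_cases hx : x ∈ dyadicI j k
  · rw [haar_support (dyadicI_disj h hx), mul_zero]
  · rw [haar_support hx, zero_mul]

lemma haar_mul_haar_lt {j j' : ℤ} (h : j < j') (k k' : ℕ) :
    ∃ c : ℝ, ∀ x, haar j k x * haar j' k' x = c * haar j' k' x := by
  set m := k' / 2 ^ (j' - (j+1)).toNat with hm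
  have hsub : dyadicI j' k' ⊆ dyadicI (j+1) m := dyadicI_subset (by omega) k'
  refine ⟨Real.sqrt ((2:ℝ)^j) *
      ((if m = 2*k then (1:ℝ) else 0) - (if m = 2*k+1 then (1:ℝ) else 0)), fun x => ?_⟩
  by_cases hx : x ∈ dyadicI j' k'
  · rw [haar_on_piece (hsub hx)]
  · rw [haar_support hx, mul_zero, mul_zero]

lemma haar_inner (p q : ℤ × ℕ) :
    ∫ x in Ici (0:ℝ), haar p.1 p.2 x * haar q.1 q.2 x = if p = q then 1 else 0 := by
  by_cases hpq : p = q
  · rw [if_pos hpq, hpq, integral_haar_sq]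
  · rw [if_neg hpq]
    rcases lt_trichotomy p.1 q.1 with h | h | h
    · obtain ⟨c, hc⟩ := haar_mul_haar_lt h p.2 q.2
      rw [integral_congr_ae (Filter.Eventually.of_forall hc), integral_const_mul,
        integral_haar, mul_zero]
    · have hk : p.2 ≠ q.2 := fun h2 => hpq (Prod.ext h h2)
      have : ∀ x, haar p.1 p.2 x * haar q.1 q.2 x = 0 := fun x => h ▸ haar_mul_haar_same hk x
      rw [integral_congr_ae (Filter.Eventually.of_forall this), integral_zero]
    · obtain ⟨c, hc⟩ := haar_mul_haar_lt h q.2 p.2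
      have : ∀ x, haar p.1 p.2 x * haar q.1 q.2 x = c * haar p.1 p.2 x := fun x => by
        rw [mul_comm]; exact hc x
      rw [integral_congr_ae (Filter.Eventually.of_forall this), integral_const_mul,
        integral_haar, mul_zero]

noncomputable def eHaar (p : ℤ × ℕ) : Lp ℝ 2 (volume.restrict (Ici (0:ℝ))) :=
  (haar_memℒp p.1 p.2).toLp _

lemma eHaar_inner (p q : ℤ × ℕ) :
    (inner ℝ (eHaar p) (eHaar q) : ℝ) = if p = q then 1 else 0 := by
  rw [MeasureTheory.L2.inner_def, ← haar_inner p q]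
  apply integral_congr_ae
  filter_upwards [(haar_memℒp p.1 p.2).coeFn_toLp, (haar_memℒp q.1 q.2).coeFn_toLp] with x h1 h2
  simp only [RCLike.inner_apply, conj_trivial]
  rw [eHaar, eHaar, h1, h2, mul_comm]

lemma eHaar_orthonormal : Orthonormal ℝ eHaar :=
  orthonormal_iff_ite.2 eHaar_inner

noncomputable def gHaar (p : ℤ × ℕ) : Lp ℝ 2 (volume.restrict (Ici (0:ℝ))) :=
  eHaar (p.1+1, 2*p.2) - eHaar (p.1+1, 2*p.2+1)

lemma gHaar_inner (p q : ℤ × ℕ) :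
    (inner ℝ (gHaar p) (gHaar q) : ℝ) = if p = q then 2 else 0 := by
  rw [gHaar, gHaar, inner_sub_left, inner_sub_right, inner_sub_right,
    eHaar_inner, eHaar_inner, eHaar_inner, eHaar_inner]
  simp only [Prod.mk.injEq]
  by_cases h : p = q
  · subst h
    have h1 : ¬(2 * p.2 = 2 * p.2 + 1) := by omega
    have h2 : ¬(2 * p.2 + 1 = 2 * p.2) := by omega
    simp [h1, h2]
    norm_num
  · have hne : p.1 + 1 = q.1 + 1 → p.1 = q.1 := by omega
    have c1 : ¬(p.1 + 1 = q.1 + 1 ∧ 2 * p.2 = 2 * q.2) := by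
      rintro ⟨a, b⟩; exact h (Prod.ext (hne a) (by omega))
    have c2 : ¬(p.1 + 1 = q.1 + 1 ∧ 2 * p.2 = 2 * q.2 + 1) := by rintro ⟨a, b⟩; omega
    have c3 : ¬(p.1 + 1 = q.1 + 1 ∧ 2 * p.2 + 1 = 2 * q.2) := by rintro ⟨a, b⟩; omega
    have c4 : ¬(p.1 + 1 = q.1 + 1 ∧ 2 * p.2 + 1 = 2 * q.2 + 1) := by
      rintro ⟨a, b⟩; exact h (Prod.ext (hne a) (by omega))
    simp only [c1, c2, c3, c4, h, if_false]
    have d1 : ¬(p.1 = q.1 ∧ p.2 = q.2) := fun ⟨a, b⟩ => h (Prod.ext a b)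
    have d2 : ¬(p.1 = q.1 ∧ 2 * p.2 = 2 * q.2 + 1) := by rintro ⟨a, b⟩; omega
    have d3 : ¬(p.1 = q.1 ∧ 2 * p.2 + 1 = 2 * q.2) := by rintro ⟨a, b⟩; omega
    simp [d1, d2, d3]

noncomputable def wHaar (p : ℤ × ℕ) : Lp ℝ 2 (volume.restrict (Ici (0:ℝ))) :=
  (Real.sqrt 2)⁻¹ • gHaar p

lemma wHaar_orthonormal : Orthonormal ℝ wHaar := by
  apply orthonormal_iff_ite.2
  intro p q
  rw [wHaar, wHaar, real_inner_smul_left, real_inner_smul_right, gHaar_inner]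
  have h2 : (Real.sqrt 2)⁻¹ * ((Real.sqrt 2)⁻¹ * 2) = 1 := by
    rw [← mul_assoc, ← mul_inv]
    rw [Real.mul_self_sqrt (by norm_num : (0:ℝ) ≤ 2)]
    norm_num
  by_cases h : p = q
  · rw [if_pos h, if_pos h, h2]
  · rw [if_neg h, if_neg h]; ring

lemma hasSum_wHaar (c : ℤ × ℕ → ℝ) (hc : Summable fun p => ‖c p‖ ^ 2) :
    ∃ T : Lp ℝ 2 (volume.restrict (Ici (0:ℝ))),
      HasSum (fun p => c p • wHaar p) T ∧ ‖T‖ ^ 2 = ∑' p, ‖c p‖ ^ 2 := by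
  have hmem : Memℓp c 2 := by
    apply memℓp_gen
    have h2 : ((2:ℝ≥0∞)).toReal = (2:ℝ) := by norm_num
    rw [h2]
    convert hc using 2 with p
    rw [← Real.rpow_natCast ‖c p‖ 2]
    norm_num
  set clp := (⟨c, hmem⟩ : lp (fun _ : ℤ × ℕ => ℝ) 2) with hclp
  have hOF := wHaar_orthonormal.orthogonalFamily
  refine ⟨hOF.linearIsometry clp, ?_, ?_⟩
  · have h := hOF.hasSum_linearIsometry clp
    convert h using 2 with p
    rfl
  · rw [LinearIsometry.norm_map]
    have hnorm := lp.norm_rpow_eq_tsum (p := 2) (by norm_num) clp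
    have h2 : ((2:ℝ≥0∞)).toReal = (2:ℝ) := by norm_num
    rw [h2] at hnorm
    have hl : ‖clp‖ ^ (2:ℝ) = ‖clp‖ ^ (2:ℕ) := by
      rw [← Real.rpow_natCast ‖clp‖ 2]; norm_num
    rw [← hl, hnorm]
    congr 1 with p
    rw [← Real.rpow_natCast ‖c p‖ 2]
    have hcp : ‖(clp : ∀ _ : ℤ × ℕ, ℝ) p‖ = ‖c p‖ := rfl
    rw [hcp]
    norm_num


set_option maxHeartbeats 2000000 in
/-- Petermichl's operator is bounded on `L²([0,∞))` with `‖𝒫f‖₂² ≤ 2‖f‖₂²`. -/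
theorem Pop_L2_bounded (f : ℝ → ℝ)
    (hf : MeasureTheory.MemLp f 2 (volume.restrict (Set.Ici (0:ℝ)))) :
    MeasureTheory.MemLp (Pop f) 2 (volume.restrict (Set.Ici (0:ℝ))) ∧
    ∫ x in Set.Ici (0:ℝ), (Pop f x) ^ 2 ≤ 2 * ∫ x in Set.Ici (0:ℝ), (f x) ^ 2 := by
  classical
  set μ := volume.restrict (Set.Ici (0:ℝ)) with hμ
  set fL := hf.toLp f with hfL
  -- coefficients
  set a : ℤ × ℕ → ℝ := fun p => ∫ y in Set.Ici (0:ℝ), f y * haar p.1 p.2 y with ha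
  have hcoef : ∀ p, (inner ℝ (eHaar p) fL : ℝ) = a p := by
    intro p
    rw [MeasureTheory.L2.inner_def]
    apply integral_congr_ae
    filter_upwards [(haar_memℒp p.1 p.2).coeFn_toLp, hf.coeFn_toLp] with x h1 h2
    simp only [RCLike.inner_apply, conj_trivial]
    rw [eHaar, h1, hfL, h2, mul_comm]
  have hbs : Summable fun p => ‖(inner ℝ (eHaar p) fL : ℝ)‖ ^ 2 :=
    Orthonormal.inner_products_summable fL eHaar_orthonormal
  have hbl : ∑' p, ‖(inner ℝ (eHaar p) fL : ℝ)‖ ^ 2 ≤ ‖fL‖ ^ 2 :=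
    Orthonormal.tsum_inner_products_le fL eHaar_orthonormal
  set c : ℤ × ℕ → ℝ := fun p => Real.sqrt 2 * a p with hc
  have hcsq : ∀ p, ‖c p‖ ^ 2 = 2 * ‖(inner ℝ (eHaar p) fL : ℝ)‖ ^ 2 := by
    intro p
    rw [hcoef, hc]
    simp only [norm_mul, mul_pow, Real.norm_eq_abs]
    rw [abs_of_nonneg (Real.sqrt_nonneg 2), Real.sq_sqrt (by norm_num : (0:ℝ) ≤ 2)]
  have hcsum : Summable fun p => ‖c p‖ ^ 2 := by
    have := hbs.mul_left 2
    exact this.congr fun p => (hcsq p).symm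
  obtain ⟨T, hTsum, hTnorm⟩ := hasSum_wHaar c hcsum
  have hsqrt2 : Real.sqrt 2 ≠ 0 := (Real.sqrt_pos.mpr two_pos).ne'
  have hTsum' : HasSum (fun p => a p • gHaar p) T := by
    have heq : (fun p => c p • wHaar p) = fun p => a p • gHaar p := by
      funext p
      rw [hc, wHaar, smul_smul]
      congr 1
      field_simp
    rwa [heq] at hTsum
  have hTbound : ‖T‖ ^ 2 ≤ 2 * ‖fL‖ ^ 2 := by
    rw [hTnorm]
    calc ∑' p, ‖c p‖ ^ 2 = ∑' p, 2 * ‖(inner ℝ (eHaar p) fL : ℝ)‖ ^ 2 := by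
          exact tsum_congr hcsq
    _ = 2 * ∑' p, ‖(inner ℝ (eHaar p) fL : ℝ)‖ ^ 2 := tsum_mul_left
    _ ≤ 2 * ‖fL‖ ^ 2 := by linarith [hbl]
  -- enumeration of the index set
  set ι : ℕ ≃ ℤ × ℕ := (Denumerable.eqv (ℤ × ℕ)).symm with hι
  set F : ℤ × ℕ → ℝ → ℝ := fun p x =>
    a p * (haar (p.1+1) (2*p.2) x - haar (p.1+1) (2*p.2+1) x) with hF
  have hPop : Pop f = fun x => ∑' p, F p x := rfl
  have hFmeas : ∀ p, Measurable (F p) := fun p =>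
    ((measurable_haar _ _).sub (measurable_haar _ _)).const_mul _
  -- partial sums in L²
  set u : ℕ → Lp ℝ 2 μ := fun n => ∑ i ∈ Finset.range n, a (ι i) • gHaar (ι i) with hu
  have hg : ∀ p : ℤ × ℕ, (gHaar p : ℝ → ℝ) =ᵐ[μ]
      fun x => haar (p.1+1) (2*p.2) x - haar (p.1+1) (2*p.2+1) x := by
    intro p
    filter_upwards [Lp.coeFn_sub (eHaar (p.1+1, 2*p.2)) (eHaar (p.1+1, 2*p.2+1)),
      (haar_memℒp (p.1+1) (2*p.2)).coeFn_toLp, (haar_memℒp (p.1+1) (2*p.2+1)).coeFn_toLp]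
      with x h1 h2 h3
    rw [gHaar, h1]
    simp only [Pi.sub_apply]
    rw [eHaar, eHaar, h2, h3]
  have hae1 : ∀ n, (u n : ℝ → ℝ) =ᵐ[μ] fun x => ∑ i ∈ Finset.range n, F (ι i) x := by
    intro n
    induction n with
    | zero =>
      simp only [hu, Finset.range_zero, Finset.sum_empty]
      exact Lp.coeFn_zero _ _ _
    | succ n ih =>
      have hstep : u (n+1) = u n + a (ι n) • gHaar (ι n) := by
        rw [hu]; simp [Finset.sum_range_succ]
      filter_upwards [hstep ▸ Lp.coeFn_add (u n) (a (ι n) • gHaar (ι n)), ih,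
        Lp.coeFn_smul (a (ι n)) (gHaar (ι n)), hg (ι n)] with x h1 h2 h3 h4
      rw [h1]
      simp only [Pi.add_apply, Finset.sum_range_succ]
      rw [h2, h3]
      simp only [Pi.smul_apply, smul_eq_mul]
      rw [h4, hF]
  have hutendsto : Filter.Tendsto u Filter.atTop (nhds T) := by
    have h1 : HasSum (fun n : ℕ => a (ι n) • gHaar (ι n)) T := (ι.hasSum_iff).2 hTsum'
    exact h1.tendsto_sum_nat
  have hTIM := tendstoInMeasure_of_tendsto_Lp hutendsto
  obtain ⟨ns, hns_mono, hns_ae⟩ := hTIM.exists_seq_tendsto_ae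
  have hkey : ∀ᵐ x ∂μ, |Pop f x| ≤ |(T : ℝ → ℝ) x| := by
    filter_upwards [ae_all_iff.2 hae1, hns_ae] with x hx1 hx2
    rw [hPop]
    show |∑' p : ℤ × ℕ, F p x| ≤ |(T : ℝ → ℝ) x|
    by_cases hs : Summable fun p => F p x
    · have h1 : HasSum (fun n : ℕ => F (ι n) x) (∑' p, F p x) := (ι.hasSum_iff).2 hs.hasSum
      have h2 := h1.tendsto_sum_nat
      have h3 : Filter.Tendsto (fun i => ∑ i' ∈ Finset.range (ns i), F (ι i') x)
          Filter.atTop (nhds (∑' p, F p x)) := h2.comp hns_mono.tendsto_atTop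
      have h4 : Filter.Tendsto (fun i => ∑ i' ∈ Finset.range (ns i), F (ι i') x)
          Filter.atTop (nhds ((T : ℝ → ℝ) x)) := by
        have : (fun i => ∑ i' ∈ Finset.range (ns i), F (ι i') x)
            = fun i => (u (ns i) : ℝ → ℝ) x := by
          funext i; rw [hx1 (ns i)]
        rw [this]; exact hx2
      rw [tendsto_nhds_unique h3 h4]
    · rw [tsum_eq_zero_of_not_summable hs]
      simp [abs_nonneg]
  -- measurability of `Pop f`
  set S : Set ℝ := {x | Summable fun p => F p x} with hS
  have hchain : ∀ x : ℝ, (Summable fun p => F p x) ↔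
      (∑' n : ℕ, (‖F (ι n) x‖₊ : ℝ≥0∞)) ≠ ⊤ := by
    intro x
    rw [ENNReal.tsum_coe_ne_top_iff_summable, ← NNReal.summable_coe]
    have hcoe : (fun n : ℕ => (‖F (ι n) x‖₊ : ℝ)) = fun n => |F (ι n) x| := by
      funext n; rw [coe_nnnorm, Real.norm_eq_abs]
    rw [hcoe, summable_abs_iff]
    exact (Equiv.summable_iff ι).symm
  have hSeq : S = (fun x => ∑' n : ℕ, (‖F (ι n) x‖₊ : ℝ≥0∞)) ⁻¹' {⊤}ᶜ := by
    ext x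
    simp only [hS, Set.mem_setOf_eq, Set.mem_preimage, Set.mem_compl_iff,
      Set.mem_singleton_iff, hchain x]
  have hSmeas : MeasurableSet S := by
    rw [hSeq]
    exact (Measurable.ennreal_tsum fun n => ((hFmeas (ι n)).nnnorm).coe_nnreal_ennreal)
      (measurableSet_singleton ⊤).compl
  set G : ℝ → ℝ := fun x =>
    Filter.liminf (fun n => ∑ i ∈ Finset.range n, F (ι i) x) Filter.atTop with hG
  have hGmeas : Measurable G :=
    Measurable.liminf fun n => Finset.measurable_sum _ fun i _ => hFmeas (ι i)
  have hPopEq : Pop f = S.indicator G := by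
    funext x
    rw [hPop]
    show ∑' p : ℤ × ℕ, F p x = S.indicator G x
    by_cases hx : x ∈ S
    · rw [Set.indicator_of_mem hx, hG]
      have hs : Summable fun p => F p x := hx
      have h1 : HasSum (fun n : ℕ => F (ι n) x) (∑' p, F p x) := (ι.hasSum_iff).2 hs.hasSum
      exact (h1.tendsto_sum_nat.liminf_eq).symm
    · rw [Set.indicator_of_notMem hx]
      exact tsum_eq_zero_of_not_summable hx
  have hPopMeas : AEStronglyMeasurable (Pop f) μ := by
    rw [hPopEq]
    exact (hGmeas.indicator hSmeas).aestronglyMeasurable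
  have hmem : MemLp (Pop f) 2 μ := by
    apply MemLp.of_le (Lp.memLp T) hPopMeas
    filter_upwards [hkey] with x hx
    simpa [Real.norm_eq_abs] using hx
  refine ⟨hmem, ?_⟩
  have hint1 : Integrable (fun x => (Pop f x) ^ 2) μ := hmem.integrable_sq
  have hint2 : Integrable (fun x => ((T : ℝ → ℝ) x) ^ 2) μ := (Lp.memLp T).integrable_sq
  have hmono : ∫ x, (Pop f x) ^ 2 ∂μ ≤ ∫ x, ((T : ℝ → ℝ) x) ^ 2 ∂μ := by
    apply integral_mono_ae hint1 hint2
    filter_upwards [hkey] with x hx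
    calc (Pop f x) ^ 2 = |Pop f x| ^ 2 := (sq_abs _).symm
    _ ≤ |(T : ℝ → ℝ) x| ^ 2 := pow_le_pow_left₀ (abs_nonneg _) hx 2
    _ = ((T : ℝ → ℝ) x) ^ 2 := sq_abs _
  have hT2 : ∫ x, ((T : ℝ → ℝ) x) ^ 2 ∂μ = ‖T‖ ^ 2 := by
    rw [← real_inner_self_eq_norm_sq, MeasureTheory.L2.inner_def]
    apply integral_congr_ae
    apply Filter.Eventually.of_forall
    intro x
    simp [RCLike.inner_apply, sq]
  have hf2 : ∫ x in Set.Ici (0:ℝ), (f x) ^ 2 = ‖fL‖ ^ 2 := by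
    rw [← real_inner_self_eq_norm_sq, MeasureTheory.L2.inner_def]
    apply integral_congr_ae
    filter_upwards [hf.coeFn_toLp] with x hx
    simp only [RCLike.inner_apply, conj_trivial, sq]
    rw [hfL, hx]
  calc ∫ x in Set.Ici (0:ℝ), (Pop f x) ^ 2 ≤ ∫ x, ((T : ℝ → ℝ) x) ^ 2 ∂μ := hmono
  _ = ‖T‖ ^ 2 := hT2
  _ ≤ 2 * ‖fL‖ ^ 2 := hTbound
  _ = 2 * ∫ x in Set.Ici (0:ℝ), (f x) ^ 2 := by rw [hf2]
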